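/- Let (X, μ) be a finite measure space, let Y ⊆ Z ⊆ X be measurable sets with μ(Y) > 0, and let κ > 0. Let b_Y = μ(Y)^{−1}·𝟙_Y, and suppose T : L²(μ) → L²(μ) is a linear operator such that: (i) T maps the constant function 1 to itself; (ii) ‖T g‖₂ ≤ √κ·‖g‖₂ for every g ∈ L²(μ) with ∫ g dμ = 0; (iii) T b_Y ≥ 0 almost everywhere, T b_Y vanishes almost everywhere outside Z, and ∫ T b_Y dμ = 1. Then, writing c = μ(Y)/μ(X), one has μ(Z)/μ(X) ≥ c/(κ·(1 − c) + c). (Isoperimetric inequality: applied with T the distance-r averaging operator A_r on a hyperbolic surface with κ = (r+1)²e^{−2r/p}, it bounds the growth of the r-neighborhood Y_r = Z of Y.) -/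

import Mathlib

open MeasureTheory

set_option maxHeartbeats 1000000 in
/-- Isoperimetric inequality from a spectral gap: let `(X, μ)` be a finite measure space,
`Y ⊆ Z` measurable with `μ(Y) > 0`, `κ > 0`, and `b_Y = μ(Y)⁻¹·𝟙_Y`. Suppose the linear
operator `T` on `L²(μ)` fixes the constant function `1`, satisfies `‖Tg‖₂ ≤ √κ·‖g‖₂` on
mean-zero `g`, and `T b_Y` is a.e. nonnegative, vanishes a.e. outside `Z`, and has total
integral `1`. Then, with `c = μ(Y)/μ(X)`, one has `μ(Z)/μ(X) ≥ c/(κ(1 − c) + c)`. -/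
theorem isoperimetric_of_spectral_bound
    {X : Type*} [MeasurableSpace X] (μ : Measure X) [IsFiniteMeasure μ]
    (Y Z : Set X) (hY : MeasurableSet Y) (hZ : MeasurableSet Z) (hYZ : Y ⊆ Z)
    (hYpos : 0 < μ Y) (κ : ℝ) (hκ : 0 < κ)
    (bY : X → ℝ) (hbYdef : bY = Set.indicator Y fun _ => ((μ Y).toReal)⁻¹)
    (hbY : MemLp bY 2 μ)
    (T : Lp ℝ 2 μ →ₗ[ℝ] Lp ℝ 2 μ)
    (hT1 : T (MemLp.toLp (fun _ : X => (1:ℝ)) (memLp_const 1)) =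
      MemLp.toLp (fun _ : X => (1:ℝ)) (memLp_const 1))
    (hTnorm : ∀ g : Lp ℝ 2 μ, (∫ x, g x ∂μ) = 0 → ‖T g‖ ≤ Real.sqrt κ * ‖g‖)
    (hTpos : 0 ≤ᵐ[μ] ⇑(T (MemLp.toLp bY hbY)))
    (hTsupp : ∀ᵐ x ∂μ, x ∉ Z → (T (MemLp.toLp bY hbY)) x = 0)
    (hTint : (∫ x, (T (MemLp.toLp bY hbY)) x ∂μ) = 1) :
    (μ Y).toReal / (μ Set.univ).toReal /
        (κ * (1 - (μ Y).toReal / (μ Set.univ).toReal) +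
          (μ Y).toReal / (μ Set.univ).toReal) ≤
      (μ Z).toReal / (μ Set.univ).toReal := by
  have hXpos : 0 < μ Set.univ := lt_of_lt_of_le hYpos (measure_mono (Set.subset_univ Y))
  set mR : ℝ := (μ Set.univ).toReal with hmRdef
  set yR : ℝ := (μ Y).toReal with hyRdef
  set zR : ℝ := (μ Z).toReal with hzRdef
  have hmR : 0 < mR := ENNReal.toReal_pos hXpos.ne' (measure_ne_top μ _)
  have hyR : 0 < yR := ENNReal.toReal_pos hYpos.ne' (measure_ne_top μ _)
  have hyz : yR ≤ zR := ENNReal.toReal_mono (measure_ne_top μ _) (measure_mono hYZ)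
  have hym : yR ≤ mR := ENNReal.toReal_mono (measure_ne_top μ _) (measure_mono (Set.subset_univ Y))
  have hzm : zR ≤ mR := ENNReal.toReal_mono (measure_ne_top μ _) (measure_mono (Set.subset_univ Z))
  have hzR : 0 < zR := lt_of_lt_of_le hyR hyz
  -- Lp elements
  set one : Lp ℝ 2 μ := MemLp.toLp (fun _ : X => (1:ℝ)) (memLp_const 1) with hone
  set b : Lp ℝ 2 μ := MemLp.toLp bY hbY with hb
  set f : Lp ℝ 2 μ := T b with hfdef
  have hone_ae : (⇑one) =ᵐ[μ] (fun _ => (1:ℝ)) := MemLp.coeFn_toLp _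
  have hb_ae : (⇑b) =ᵐ[μ] bY := MemLp.coeFn_toLp _
  -- integrability
  have hint : ∀ h : Lp ℝ 2 μ, Integrable h μ := fun h =>
    (Lp.memLp h).integrable (by norm_num)
  -- ∫ bY = 1
  have hintbY : (∫ x, bY x ∂μ) = 1 := by
    rw [hbYdef, integral_indicator_const _ hY]
    simp [smul_eq_mul, measureReal_def, ← hyRdef, mul_inv_cancel₀ hyR.ne']
  have hintb : (∫ x, b x ∂μ) = 1 := by
    rw [integral_congr_ae hb_ae, hintbY]
  have hintone : (∫ x, one x ∂μ) = mR := by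
    rw [integral_congr_ae hone_ae]; simp [hmRdef, measureReal_def]
  -- norms squared
  have hnorm_sq : ∀ h : Lp ℝ 2 μ, ‖h‖ ^ 2 = ∫ x, h x * h x ∂μ := by
    intro h
    rw [← real_inner_self_eq_norm_sq, L2.inner_def]
    simp [RCLike.inner_apply]; simp_rw [sq]
  have hnb : ‖b‖ ^ 2 = yR⁻¹ := by
    rw [hnorm_sq]
    have : (fun x => b x * b x) =ᵐ[μ] Y.indicator (fun _ => yR⁻¹ * yR⁻¹) := by
      filter_upwards [hb_ae] with x hx
      rw [hx, hbYdef]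
      by_cases h : x ∈ Y <;> simp [Set.indicator_of_mem, Set.indicator_of_notMem, h, hyRdef]
    rw [integral_congr_ae this, integral_indicator_const _ hY, smul_eq_mul, measureReal_def, ← hyRdef]
    field_simp
  have hnone : ‖one‖ ^ 2 = mR := by
    rw [hnorm_sq]
    have : (fun x => one x * one x) =ᵐ[μ] (fun _ => (1:ℝ)) := by
      filter_upwards [hone_ae] with x hx; rw [hx]; ring
    rw [integral_congr_ae this]; simp [hmRdef, measureReal_def]
  have hinner_b_one : (inner ℝ b one) = 1 := by
    rw [L2.inner_def]
    have : (fun x => (inner ℝ (b x) (one x))) =ᵐ[μ] (fun x => bY x) := by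
      filter_upwards [hb_ae, hone_ae] with x hx hx1
      simp [RCLike.inner_apply, hx, hx1]
    rw [integral_congr_ae this, hintbY]
  -- the mean-zero part g
  set g : Lp ℝ 2 μ := b - mR⁻¹ • one with hg
  have hg_ae : (⇑g) =ᵐ[μ] (fun x => b x - mR⁻¹ * one x) := by
    filter_upwards [Lp.coeFn_sub b (mR⁻¹ • one), Lp.coeFn_smul (mR⁻¹ : ℝ) one] with x h1 h2
    simp only [hg, h1, h2, Pi.sub_apply, Pi.smul_apply, smul_eq_mul]
  have hintg : (∫ x, g x ∂μ) = 0 := by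
    rw [integral_congr_ae hg_ae, integral_sub (hint b) (((hint one).const_mul _)),
      integral_const_mul, hintb, hintone]
    field_simp; ring
  have hng : ‖g‖ ^ 2 = yR⁻¹ - mR⁻¹ := by
    have : ‖g‖ ^ 2 = ‖b‖ ^ 2 - 2 * (inner ℝ b (mR⁻¹ • one)) + ‖mR⁻¹ • one‖ ^ 2 := by
      rw [hg]; exact norm_sub_sq_real b (mR⁻¹ • one)
    rw [this, real_inner_smul_right, hinner_b_one, norm_smul, mul_pow, hnone, hnb]
    simp [Real.norm_eq_abs, abs_of_pos (inv_pos.mpr hmR)]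
    field_simp
    ring
  -- Tg = f - mR⁻¹ • one
  have hTg : T g = f - mR⁻¹ • one := by
    rw [hg, map_sub, LinearMap.map_smul, hT1, hfdef]
  have hTg_ae : (⇑(T g)) =ᵐ[μ] (fun x => f x - mR⁻¹ * one x) := by
    rw [hTg]
    filter_upwards [Lp.coeFn_sub f (mR⁻¹ • one), Lp.coeFn_smul (mR⁻¹ : ℝ) one] with x h1 h2
    simp only [h1, h2, Pi.sub_apply, Pi.smul_apply, smul_eq_mul]
  -- orthogonality: ∫ Tg = 0
  have hintTg : (∫ x, (T g) x ∂μ) = 0 := by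
    rw [integral_congr_ae hTg_ae, integral_sub (hint f) ((hint one).const_mul _),
      integral_const_mul, hTint, hintone]
    field_simp; ring
  have hinner_one_Tg : (inner ℝ one (T g)) = 0 := by
    rw [L2.inner_def]
    have : (fun x => (inner ℝ (one x) ((T g) x))) =ᵐ[μ] (fun x => (T g) x) := by
      filter_upwards [hone_ae] with x hx
      simp [RCLike.inner_apply, hx]
    rw [integral_congr_ae this, hintTg]
  -- norm of f
  have hf_eq : f = mR⁻¹ • one + T g := by
    rw [hTg]; abel
  have hnf : ‖f‖ ^ 2 ≤ mR⁻¹ + κ * (yR⁻¹ - mR⁻¹) := by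
    have hexp : ‖f‖ ^ 2 = ‖mR⁻¹ • one‖ ^ 2 + 2 * (inner ℝ (mR⁻¹ • one) (T g)) + ‖T g‖ ^ 2 := by
      rw [hf_eq]; exact norm_add_sq_real _ _
    rw [hexp, real_inner_smul_left, hinner_one_Tg, norm_smul, mul_pow, hnone]
    have hTgn : ‖T g‖ ^ 2 ≤ κ * (yR⁻¹ - mR⁻¹) := by
      have h1 := hTnorm g hintg
      have h2 : ‖T g‖ ^ 2 ≤ (Real.sqrt κ * ‖g‖) ^ 2 := by
        apply pow_le_pow_left₀ (norm_nonneg _) h1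
      calc ‖T g‖ ^ 2 ≤ (Real.sqrt κ * ‖g‖) ^ 2 := h2
        _ = κ * ‖g‖ ^ 2 := by rw [mul_pow, Real.sq_sqrt hκ.le]
        _ = κ * (yR⁻¹ - mR⁻¹) := by rw [hng]
    have : ‖(mR⁻¹ : ℝ)‖ ^ 2 * mR = mR⁻¹ := by
      rw [Real.norm_eq_abs, abs_of_pos (inv_pos.mpr hmR)]; field_simp
    rw [this]
    linarith
  -- Cauchy-Schwarz with indicator of Z
  set χ : Lp ℝ 2 μ := indicatorConstLp 2 hZ (measure_ne_top μ Z) (1:ℝ) with hχ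
  have hχ_ae : (⇑χ) =ᵐ[μ] Z.indicator (fun _ => (1:ℝ)) := indicatorConstLp_coeFn
  have hinner_fχ : (inner ℝ f χ) = 1 := by
    rw [L2.inner_def]
    have : (fun x => (inner ℝ (f x) (χ x))) =ᵐ[μ] (fun x => f x) := by
      filter_upwards [hχ_ae, hTsupp] with x hx hsupp
      by_cases h : x ∈ Z
      · simp [RCLike.inner_apply, hx, Set.indicator_of_mem h]
      · simp [RCLike.inner_apply, hx, Set.indicator_of_notMem h, hsupp h]
    rw [integral_congr_ae this, hTint]
  have hnχ : ‖χ‖ = Real.sqrt zR := by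
    rw [hχ, norm_indicatorConstLp (by norm_num) (by norm_num)]
    simp [Real.sqrt_eq_rpow, hzRdef, measureReal_def]
  have hCS : (1:ℝ) ≤ ‖f‖ * Real.sqrt zR := by
    calc (1:ℝ) = (inner ℝ f χ) := hinner_fχ.symm
      _ ≤ ‖f‖ * ‖χ‖ := real_inner_le_norm f χ
      _ = ‖f‖ * Real.sqrt zR := by rw [hnχ]
  have hkey : (1:ℝ) ≤ (mR⁻¹ + κ * (yR⁻¹ - mR⁻¹)) * zR := by
    have h1 : (1:ℝ) ≤ (‖f‖ * Real.sqrt zR) ^ 2 := by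
      nlinarith [hCS]
    have h2 : (‖f‖ * Real.sqrt zR) ^ 2 = ‖f‖ ^ 2 * zR := by
      rw [mul_pow, Real.sq_sqrt hzR.le]
    nlinarith [h1, h2, hnf, hzR]
  -- final algebra
  have hD : 0 < κ * (1 - yR / mR) + yR / mR := by
    have h1 : 0 ≤ 1 - yR / mR := by
      rw [sub_nonneg]; exact div_le_one_of_le₀ hym hmR.le
    have h2 : 0 < yR / mR := div_pos hyR hmR
    nlinarith
  rw [div_le_div_iff₀ hD hmR]
  have hyrzr : yR ≤ zR * (κ * (1 - yR / mR) + yR / mR) := by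
    have : zR * (κ * (1 - yR / mR) + yR / mR) = yR * ((mR⁻¹ + κ * (yR⁻¹ - mR⁻¹)) * zR) := by
      field_simp
      ring
    rw [this]
    nlinarith [hkey, hyR]
  calc yR / mR * mR = yR := by field_simp
    _ ≤ zR * (κ * (1 - yR / mR) + yR / mR) := hyrzr
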